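/- Let λ and λₙ be C² positive functions on [0,∞) with value > 1 at 0 and convex logarithms, with λₙ(μ) ≥ λₙ₊₁(μ) ≥ λ(μ) for all n, μ and λₙ → λ pointwise. If inf_{μ>0} ln λ(μ)/μ = lim_{μ→∞} ln λ(μ)/μ, then cₙ* := inf_{μ>0} ln λₙ(μ)/μ converges to c* := inf_{μ>0} ln λ(μ)/μ. -/

import Mathlib

open Set Filter

theorem stmt_10 (l : ℝ → ℝ) (ln : ℕ → ℝ → ℝ)
    (hC2 : ContDiffOn ℝ 2 l (Ici 0))
    (hC2n : ∀ n, ContDiffOn ℝ 2 (ln n) (Ici 0))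
    (hpos : ∀ μ ∈ Ici (0:ℝ), 0 < l μ)
    (hposn : ∀ n, ∀ μ ∈ Ici (0:ℝ), 0 < ln n μ)
    (h0 : 1 < l 0)
    (h0n : ∀ n, 1 < ln n 0)
    (hconv : ConvexOn ℝ (Ici 0) (fun μ => Real.log (l μ)))
    (hconvn : ∀ n, ConvexOn ℝ (Ici 0) (fun μ => Real.log (ln n μ)))
    (hmono : ∀ n, ∀ μ ∈ Ici (0:ℝ), ln (n + 1) μ ≤ ln n μ)
    (hge : ∀ n, ∀ μ ∈ Ici (0:ℝ), l μ ≤ ln n μ)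
    (hptwise : ∀ μ ∈ Ici (0:ℝ), Tendsto (fun n => ln n μ) atTop (nhds (l μ)))
    (hinf : Tendsto (fun μ => Real.log (l μ) / μ) atTop
      (nhds (sInf ((fun μ => Real.log (l μ) / μ) '' Ioi 0)))) :
    Tendsto (fun n => sInf ((fun μ => Real.log (ln n μ) / μ) '' Ioi 0)) atTop
      (nhds (sInf ((fun μ => Real.log (l μ) / μ) '' Ioi 0))) := by
  set g : ℝ → ℝ := fun μ => Real.log (l μ) with hg
  set f : ℝ → ℝ := fun μ => g μ / μ with hf
  -- continuity of g on Ici 0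
  have hgcont : ContinuousOn g (Ici 0) := by
    apply Real.continuousOn_log.comp hC2.continuousOn
    intro μ hμ
    exact (hpos μ hμ).ne'
  have hg0 : 0 < g 0 := Real.log_pos h0
  -- get δ > 0 such that g is positive on [0, δ]
  have hev : ∀ᶠ μ in nhdsWithin 0 (Ici 0), 0 < g μ :=
    (hgcont 0 (self_mem_Ici)).eventually (eventually_gt_nhds hg0)
  have hev' : {μ : ℝ | 0 < g μ} ∈ nhdsWithin 0 (Ici 0) := hev
  rw [mem_nhdsGE_iff_exists_Icc_subset] at hev'
  obtain ⟨δ, hδ, hsub⟩ := hev' 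
  set δ' : ℝ := min δ 1 with hδ'
  have hδ'pos : 0 < δ' := lt_min hδ zero_lt_one
  have hδ'le1 : δ' ≤ 1 := min_le_right _ _
  -- f is bounded below on [δ', 1] by compactness
  have hIccsub : Icc δ' 1 ⊆ Ici (0:ℝ) := fun x hx => le_trans hδ'pos.le hx.1
  have hfc : ContinuousOn f (Icc δ' 1) := by
    apply (hgcont.mono hIccsub).div continuousOn_id
    intro x hx
    exact (lt_of_lt_of_le hδ'pos hx.1).ne'
  obtain ⟨m, hm⟩ := (isCompact_Icc.bddBelow_image hfc)
  set B : ℝ := min (min 0 m) (g 1 - g 0) with hB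
  -- B is a lower bound for f on Ioi 0
  have hlow : ∀ μ ∈ Ioi (0:ℝ), B ≤ f μ := by
    intro μ hμ
    have hμ0 : (0:ℝ) < μ := hμ
    by_cases h1 : μ ≤ δ'
    · have hgpos : 0 < g μ := hsub ⟨hμ0.le, h1.trans (min_le_left _ _)⟩
      have : 0 ≤ f μ := le_of_lt (div_pos hgpos hμ0)
      calc B ≤ min 0 m := min_le_left _ _
        _ ≤ 0 := min_le_left _ _
        _ ≤ f μ := this
    · by_cases h2 : μ ≤ 1
      · have : m ≤ f μ := hm ⟨μ, ⟨le_of_not_ge h1, h2⟩, rfl⟩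
        calc B ≤ min 0 m := min_le_left _ _
          _ ≤ m := min_le_right _ _
          _ ≤ f μ := this
      · have h2' : (1:ℝ) < μ := lt_of_not_ge h2
        have hslope := hconv.slope_mono_adjacent (self_mem_Ici)
          (show μ ∈ Ici (0:ℝ) from hμ0.le) zero_lt_one h2'
        -- (g 1 - g 0)/(1-0) ≤ (g μ - g 1)/(μ - 1)
        have hμ1 : 0 < μ - 1 := by linarith
        have hkey : g 0 + (g 1 - g 0) * μ ≤ g μ := by
          rw [div_le_div_iff₀ (by norm_num) hμ1] at hslope
          nlinarith [hslope]
        have : (g 1 - g 0) ≤ f μ := by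
          rw [hf, le_div_iff₀ hμ0]
          nlinarith [hg0]
        exact le_trans (min_le_right _ _) this
  have hne : (f '' Ioi 0).Nonempty := ⟨f 1, ⟨1, by norm_num, rfl⟩⟩
  have hbdd : BddBelow (f '' Ioi 0) := ⟨B, by rintro x ⟨μ, hμ, rfl⟩; exact hlow μ hμ⟩
  set c : ℝ := sInf (f '' Ioi 0) with hc
  -- f ≤ fₙ on Ioi 0 pointwise
  have hfle : ∀ n, ∀ μ ∈ Ioi (0:ℝ), f μ ≤ Real.log (ln n μ) / μ := by
    intro n μ hμ
    have hμ0 : (0:ℝ) < μ := hμ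
    have hl : Real.log (l μ) ≤ Real.log (ln n μ) :=
      (Real.log_le_log_iff (hpos μ hμ0.le) (hposn n μ hμ0.le)).2 (hge n μ hμ0.le)
    exact (div_le_div_iff_of_pos_right hμ0).2 hl
  have hnen : ∀ n : ℕ, ((fun μ => Real.log (ln n μ) / μ) '' Ioi 0).Nonempty :=
    fun n => ⟨_, ⟨1, by norm_num, rfl⟩⟩
  have hbddn : ∀ n : ℕ, BddBelow ((fun μ => Real.log (ln n μ) / μ) '' Ioi 0) := by
    intro n
    refine ⟨B, ?_⟩
    rintro x ⟨μ, hμ, rfl⟩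
    exact (hlow μ hμ).trans (hfle n μ hμ)
  refine tendsto_order.2 ⟨?_, ?_⟩
  · intro a ha
    filter_upwards with n
    refine lt_of_lt_of_le ha (le_csInf (hnen n) ?_)
    rintro x ⟨μ, hμ, rfl⟩
    exact (csInf_le hbdd ⟨μ, hμ, rfl⟩).trans (hfle n μ hμ)
  · intro a ha
    obtain ⟨x, ⟨μ₀, hμ₀, rfl⟩, hxa⟩ := exists_lt_of_csInf_lt hne ha
    have hμ₀0 : (0:ℝ) < μ₀ := hμ₀
    have ht : Tendsto (fun n => Real.log (ln n μ₀) / μ₀) atTop (nhds (f μ₀)) := by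
      exact (((Real.continuousAt_log (hpos μ₀ hμ₀0.le).ne').tendsto.comp
        (hptwise μ₀ hμ₀0.le)).div_const μ₀)
    filter_upwards [ht.eventually_lt_const hxa] with n hn
    exact lt_of_le_of_lt (csInf_le (hbddn n) ⟨μ₀, hμ₀, rfl⟩) hn
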